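/- arXiv:2209.00967 — 5 statements merged into one kernel-verified Lean document; each statement's English description precedes it below -/
import Mathlib

section
/- Ackermann membership satisfies the union axiom: for every natural number m there exists a natural number u such that for every natural number k, k ∈ₐ u if and only if there is some j with j ∈ₐ m and k ∈ₐ j. -/
/-- Ackermann membership: `n ∈ₐ m` iff the `n`-th binary digit of `m` is `1`. -/
def AckMem (n m : ℕ) : Prop := Nat.testBit m n = true

instance : Std.Commutative Nat.lor := ⟨Nat.lor_comm⟩
instance : Std.Associative Nat.lor := ⟨Nat.lor_assoc⟩

lemma testBit_fold_lor (s : Finset ℕ) (f : ℕ → ℕ) (k : ℕ) :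
    Nat.testBit (s.fold Nat.lor 0 f) k = true ↔ ∃ j ∈ s, Nat.testBit (f j) k = true := by
  classical
  induction s using Finset.induction_on with
  | empty => simp [Nat.zero_testBit]
  | @insert _ _ h ih =>
    rw [Finset.fold_insert h]; show ((f _ ||| _).testBit k = true) ↔ _; rw [Nat.testBit_lor, Bool.or_eq_true, ih]
    simp

/-- Union for Ackermann membership. -/
theorem ackMem_union (m : ℕ) :
    ∃ u : ℕ, ∀ k : ℕ, AckMem k u ↔ ∃ j : ℕ, AckMem j m ∧ AckMem k j := by
  classical
  refine ⟨(Finset.range m).fold Nat.lor 0 (fun j => if Nat.testBit m j then j else 0), fun k => ?_⟩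
  unfold AckMem
  rw [testBit_fold_lor]
  constructor
  · rintro ⟨j, hj, hjk⟩
    by_cases h : Nat.testBit m j
    · exact ⟨j, h, by simpa [h] using hjk⟩
    · simp [h, Nat.zero_testBit] at hjk
  · rintro ⟨j, hjm, hkj⟩
    have hjlt : j < m := lt_of_lt_of_le (Nat.lt_two_pow_self (n := j)) (Nat.ge_two_pow_of_testBit hjm)
    exact ⟨j, Finset.mem_range.mpr hjlt, by simp [hjm, hkj]⟩
end

section
/- Ackermann membership satisfies the separation scheme: for every natural number m and every predicate P : ℕ → Prop there exists a natural number c such that for every natural number k, k ∈ₐ c if and only if k ∈ₐ m and P k. -/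
open Classical in
private lemma ack_sep_aux : ∀ m : ℕ, ∀ P : ℕ → Prop,
    ∃ c : ℕ, ∀ k : ℕ, Nat.testBit c k = true ↔ Nat.testBit m k = true ∧ P k := by
  intro m
  induction m using Nat.strong_induction_on with
  | _ m ih =>
    intro P
    rcases Nat.eq_zero_or_pos m with rfl | hm
    · exact ⟨0, by simp⟩
    obtain ⟨c', hc'⟩ := ih (m / 2) (Nat.div_lt_self hm (by norm_num)) (fun k => P (k + 1))
    refine ⟨Nat.bit (decide (m % 2 = 1 ∧ P 0)) c', fun k => ?_⟩
    have hbit : m = Nat.bit (m.testBit 0) (m / 2) := by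
      rw [Nat.testBit_zero]
      simp [Nat.bit]
      rcases Nat.mod_two_eq_zero_or_one m with h | h <;>
        simp [h, Nat.div_add_mod, Nat.two_mul_div_two_of_even, Nat.even_iff,
          Nat.odd_iff] <;> omega
    cases k with
    | zero =>
      simp [Nat.testBit_bit_zero, Nat.testBit_zero]
    | succ k =>
      rw [Nat.testBit_bit_succ, hc' k]
      conv_rhs => rw [hbit, Nat.testBit_bit_succ]

/-- Separation for Ackermann membership. -/
theorem ackMem_separation (m : ℕ) (P : ℕ → Prop) :
    ∃ c : ℕ, ∀ k : ℕ, AckMem k c ↔ AckMem k m ∧ P k := by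
  obtain ⟨c, hc⟩ := ack_sep_aux m P
  exact ⟨c, fun k => hc k⟩
end

section
/- Ackermann membership satisfies the replacement scheme: for every natural number m and every function f : ℕ → ℕ there exists a natural number c such that for every natural number k, k ∈ₐ c if and only if there is some j with j ∈ₐ m and f j = k. -/
instance : Std.Commutative (α := ℕ) (· ||| ·) := ⟨Nat.lor_comm⟩
instance : Std.Associative (α := ℕ) (· ||| ·) := ⟨Nat.lor_assoc⟩

lemma testBit_fold (S : Finset ℕ) (g : ℕ → ℕ) (n : ℕ) :
    Nat.testBit (S.fold (· ||| ·) 0 g) n = true ↔ ∃ j ∈ S, Nat.testBit (g j) n = true := by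
  classical
  induction S using Finset.induction with
  | empty => simp
  | insert _ _ h ih =>
    rw [Finset.fold_insert h]
    simp only [Nat.testBit_lor, Bool.or_eq_true, ih, Finset.mem_insert]
    constructor
    · rintro (h | ⟨j, hj, hb⟩)
      exacts [⟨_, Or.inl rfl, h⟩, ⟨j, Or.inr hj, hb⟩]
    · rintro ⟨j, (rfl | hj), hb⟩
      exacts [Or.inl hb, Or.inr ⟨j, hj, hb⟩]

/-- Replacement for Ackermann membership. -/
theorem ackMem_replacement (m : ℕ) (f : ℕ → ℕ) :
    ∃ c : ℕ, ∀ k : ℕ, AckMem k c ↔ ∃ j : ℕ, AckMem j m ∧ f j = k := by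
  classical
  refine ⟨(Finset.range m).filter (fun j => Nat.testBit m j) |>.fold (· ||| ·) 0 (fun j => 2 ^ f j), fun k => ?_⟩
  rw [AckMem, testBit_fold]
  constructor
  · rintro ⟨j, hj, hb⟩
    simp only [Finset.mem_filter] at hj
    refine ⟨j, hj.2, ?_⟩
    by_contra hne
    rw [Nat.testBit_two_pow_of_ne hne] at hb
    exact Bool.false_ne_true hb
  · rintro ⟨j, hj, rfl⟩
    refine ⟨j, ?_, by simp [Nat.testBit_two_pow_self]⟩
    simp only [Finset.mem_filter, Finset.mem_range]
    exact ⟨lt_of_lt_of_le (Nat.lt_two_pow_self (n := j)) (Nat.ge_two_pow_of_testBit hj), hj⟩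
end

section
/- Ackermann membership satisfies the axiom of transitive closure: for every natural number m there exists a natural number t such that m ∈ₐ t and t is transitive for Ackermann membership, i.e., for all a and b, if a ∈ₐ b and b ∈ₐ t then a ∈ₐ t. -/
/-- Transitive closure for Ackermann membership: every `m` is an element of a
transitive `t`. -/
theorem ackMem_transClosure (m : ℕ) :
    ∃ t : ℕ, AckMem m t ∧ ∀ a b : ℕ, AckMem a b → AckMem b t → AckMem a t := by
  refine ⟨2 ^ (m + 1) - 1, ?_, ?_⟩
  · simp [AckMem, Nat.testBit_two_pow_sub_one]
  · intro a b hab hbt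
    simp only [AckMem, Nat.testBit_two_pow_sub_one, decide_eq_true_eq] at *
    have h1 : 2 ^ a ≤ b := Nat.ge_two_pow_of_testBit hab
    have h2 : a < 2 ^ a := Nat.lt_two_pow_self
    omega
end

section
/- There exists an injective function f : ℕ → ZFSet such that for all natural numbers n and m, n ∈ₐ m if and only if f n ∈ f m, and moreover for every m the set f m consists exactly of the elements f n for n ∈ₐ m (i.e., for every x, x ∈ f m if and only if x = f n for some n with n ∈ₐ m). In other words, the natural numbers equipped with Ackermann membership embed as an ∈-isomorphic copy of a transitive collection of hereditarily finite sets inside the sets of ZFC. -/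
theorem lt_of_testBit' {n m : ℕ} (h : Nat.testBit m n = true) : n < m :=
  lt_of_lt_of_le Nat.lt_two_pow_self (Nat.ge_two_pow_of_testBit h)

universe u

noncomputable def ackSet : ℕ → ZFSet.{u} := fun m =>
  ZFSet.range (fun n : {n : ℕ // Nat.testBit m n = true} => ackSet n)
decreasing_by exact lt_of_testBit' n.2

theorem mem_ack {m : ℕ} {x : ZFSet} :
    x ∈ ackSet m ↔ ∃ n : ℕ, Nat.testBit m n = true ∧ x = ackSet n := by
  rw [ackSet, ZFSet.mem_range]
  constructor
  · rintro ⟨⟨n, hn⟩, rfl⟩; exact ⟨n, hn, rfl⟩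
  · rintro ⟨n, hn, rfl⟩; exact ⟨⟨n, hn⟩, rfl⟩

theorem ack_inj : Function.Injective ackSet := by
  intro a
  induction a using Nat.strong_induction_on with
  | _ a ih =>
    intro b hab
    apply Nat.eq_of_testBit_eq
    intro n
    rw [Bool.eq_iff_iff]
    constructor
    · intro hn
      have : ackSet n ∈ ackSet b := by rw [← hab]; exact mem_ack.2 ⟨n, hn, rfl⟩
      obtain ⟨k, hk, he⟩ := mem_ack.1 this
      rwa [ih n (lt_of_testBit' hn) he]
    · intro hn
      have : ackSet n ∈ ackSet a := by rw [hab]; exact mem_ack.2 ⟨n, hn, rfl⟩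
      obtain ⟨k, hk, he⟩ := mem_ack.1 this
      rwa [← ih k (lt_of_testBit' hk) he.symm]

/-- The natural numbers with Ackermann membership embed as a transitive,
∈-isomorphic copy of the hereditarily finite sets inside `ZFSet`. -/
theorem ackMem_embeds_in_zfset :
    ∃ f : ℕ → ZFSet, Function.Injective f ∧
      (∀ n m : ℕ, AckMem n m ↔ f n ∈ f m) ∧
      (∀ (m : ℕ) (x : ZFSet), x ∈ f m ↔ ∃ n : ℕ, AckMem n m ∧ x = f n) := by
  refine ⟨ackSet, ack_inj, fun n m => ?_, fun m x => mem_ack⟩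
  constructor
  · intro h; exact mem_ack.2 ⟨n, h, rfl⟩
  · intro h; obtain ⟨k, hk, he⟩ := mem_ack.1 h
    rwa [ack_inj he]
end
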